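/- Let B : ℝ → ℝ be twice differentiable with B(x) > 0 for all x, let Ω̃ ∈ ℝ, and suppose B satisfies B'' = Ω̃² / B³. Then there exist constants B₀ > 0 and x₀ ∈ ℝ with B(x) = B₀·√(Ω² + (x − x₀)²) where Ω = Ω̃/B₀², provided Ω̃ ≠ 0. -/

import Mathlib

private lemma const_of_deriv0 {h : ℝ → ℝ} (hh : ∀ x, HasDerivAt h 0 x) (x : ℝ) :
    h x = h 0 :=
  is_const_of_deriv_eq_zero (fun y => (hh y).differentiableAt)
    (fun y => (hh y).deriv) x 0

/-- General positive global solution of `B'' = Ω̃²/B³` (rotating extremal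
isolated-horizon constraint): `B(x) = B₀ √(Ω² + (x-x₀)²)` with `Ω = Ω̃/B₀²`. -/
theorem stmt2 (B : ℝ → ℝ) (Ω' : ℝ) (hΩ : Ω' ≠ 0)
    (hB1 : Differentiable ℝ B) (hB2 : Differentiable ℝ (deriv B))
    (hpos : ∀ x, 0 < B x)
    (hode : ∀ x, deriv (deriv B) x = Ω' ^ 2 / (B x) ^ 3) :
    ∃ B₀ x₀ : ℝ, 0 < B₀ ∧
      ∀ x, B x = B₀ * Real.sqrt ((Ω' / B₀ ^ 2) ^ 2 + (x - x₀) ^ 2) := by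
  have hBne : ∀ x, B x ≠ 0 := fun x => (hpos x).ne'
  have hB' : ∀ x, HasDerivAt B (deriv B x) x := fun x => (hB1 x).hasDerivAt
  have hB'' : ∀ x, HasDerivAt (deriv B) (Ω' ^ 2 / (B x) ^ 3) x := fun x => by
    rw [← hode x]; exact (hB2 x).hasDerivAt
  set E : ℝ := deriv B 0 ^ 2 + Ω' ^ 2 / (B 0) ^ 2 with hE
  have hEpos : 0 < E := by
    have h0 : (0:ℝ) < Ω' ^ 2 := by positivity
    have h1 : (0:ℝ) < Ω' ^ 2 / (B 0) ^ 2 := div_pos h0 (pow_pos (hpos 0) 2)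
    rw [hE]
    nlinarith [sq_nonneg (deriv B 0)]
  have hEne : E ≠ 0 := hEpos.ne'
  -- energy is constant
  have hg : ∀ x, deriv B x ^ 2 + Ω' ^ 2 / (B x) ^ 2 = E := by
    have key : ∀ x, HasDerivAt (fun x => deriv B x ^ 2 + Ω' ^ 2 / (B x) ^ 2) 0 x := by
      intro x
      have h1 := (hB'' x).pow 2
      have h2 := (hasDerivAt_const x (Ω' ^ 2)).div ((hB' x).pow 2)
        (pow_ne_zero 2 (hBne x))
      have h3 := h1.add h2
      convert h3 using 1
      · rfl
      · rfl
      · rfl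
      have hb := hBne x
      simp only [Pi.pow_apply]
      field_simp
      ring
    intro x
    exact const_of_deriv0 key x
  -- first integration
  have hq : ∀ x, 2 * (B x * deriv B x) - 2 * E * x = 2 * (B 0 * deriv B 0) := by
    have key : ∀ x, HasDerivAt (fun x => 2 * (B x * deriv B x) - 2 * E * x) 0 x := by
      intro x
      have h1 := (((hB' x).mul (hB'' x)).const_mul 2).sub
        ((hasDerivAt_id x).const_mul (2 * E))
      convert h1 using 1
      · rfl
      · rfl
      · rfl
      have h3 : B x * (Ω' ^ 2 / B x ^ 3) = Ω' ^ 2 / B x ^ 2 := by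
        have hb := hBne x
        field_simp
      have h2 := hg x
      rw [mul_one]
      nlinarith [h2, h3]
    intro x
    have h := const_of_deriv0 key x
    simpa using h
  -- second integration
  have hr : ∀ x, B x ^ 2 = E * x ^ 2 + 2 * (B 0 * deriv B 0) * x + B 0 ^ 2 := by
    have key : ∀ x, HasDerivAt
        (fun x => B x ^ 2 - E * x ^ 2 - 2 * (B 0 * deriv B 0) * x) 0 x := by
      intro x
      have h1 := (((hB' x).pow 2).sub (((hasDerivAt_pow 2 x)).const_mul E)).sub
        ((hasDerivAt_id x).const_mul (2 * (B 0 * deriv B 0)))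
      convert h1 using 1
      · rfl
      · rfl
      · rfl
      have h2 := hq x
      push_cast
      nlinarith [h2]
    intro x
    have h := const_of_deriv0 key x
    nlinarith [h]
  -- assemble
  refine ⟨Real.sqrt E, -(2 * (B 0 * deriv B 0)) / (2 * E), Real.sqrt_pos.mpr hEpos,
    fun x => ?_⟩
  have hsq : Real.sqrt E ^ 2 = E := Real.sq_sqrt hEpos.le
  rw [hsq]
  have hc : B 0 ^ 2 = (Ω' ^ 2 + (B 0 * deriv B 0) ^ 2) / E := by
    rw [eq_div_iff hEne, hE]
    have hb := hBne 0
    field_simp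
    ring
  have hkey : B x ^ 2 =
      E * ((Ω' / E) ^ 2 + (x - -(2 * (B 0 * deriv B 0)) / (2 * E)) ^ 2) := by
    rw [hr x, hc]
    field_simp
    ring
  calc B x = Real.sqrt (B x ^ 2) := (Real.sqrt_sq (hpos x).le).symm
    _ = Real.sqrt (E * ((Ω' / E) ^ 2 + (x - -(2 * (B 0 * deriv B 0)) / (2 * E)) ^ 2)) := by
        rw [hkey]
    _ = Real.sqrt E * Real.sqrt ((Ω' / E) ^ 2 + (x - -(2 * (B 0 * deriv B 0)) / (2 * E)) ^ 2) :=
        Real.sqrt_mul hEpos.le _
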